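/- arXiv:1605.01869 — 6 statements merged into one kernel-verified Lean document; each statement's English description precedes it below -/
import Mathlib

section
/- Let a ∈ F_2^s, let v_1, v_2, v_3 ∈ F_2^s have pairwise disjoint supports, and let X ⊆ F_2^s be a finite set such that each of a+v_1, a+v_2, a+v_3 can be written as a sum of elements of X indexed by pairwise disjoint subsets T_1, T_2, T_3 of X. Then a lies in the F_2-linear span of X^2 = { xy : x,y ∈ X, x ≠ y }, where xy denotes the componentwise product. -/
lemma zmod2_key (A B C D : ZMod 2) (h1 : B*C = 0) (h2 : B*D = 0) (h3 : C*D = 0) :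
    A = (A+B)*(A+C) + (A+B)*(A+D) + (A+C)*(A+D) := by
  revert A B C D; decide

lemma support_disjoint_mul_zero {s : ℕ} {u v : Fin s → ZMod 2}
    (h : Disjoint (Function.support u) (Function.support v)) : u * v = 0 := by
  funext i
  by_cases hu : u i = 0
  · simp [hu]
  · have : i ∉ Function.support v := fun hv => (Set.disjoint_left.mp h hu) hv
    simp [Function.mem_support, not_not] at this
    simp [this]

/-- If `a + vₘ` is a sum of elements of `X` over pairwise disjoint subsets
`T₁,T₂,T₃` of `X`, and the `vₘ` have pairwise disjoint supports, then `a`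
lies in the span of `X² = {xy : x ≠ y ∈ X}`. -/
theorem stmt_4 (s : ℕ) (a v₁ v₂ v₃ : Fin s → ZMod 2)
    (h12 : Disjoint (Function.support v₁) (Function.support v₂))
    (h13 : Disjoint (Function.support v₁) (Function.support v₃))
    (h23 : Disjoint (Function.support v₂) (Function.support v₃))
    (X : Finset (Fin s → ZMod 2)) (T₁ T₂ T₃ : Finset (Fin s → ZMod 2))
    (hT₁ : T₁ ⊆ X) (hT₂ : T₂ ⊆ X) (hT₃ : T₃ ⊆ X)
    (hd12 : Disjoint T₁ T₂) (hd13 : Disjoint T₁ T₃) (hd23 : Disjoint T₂ T₃)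
    (h1 : a + v₁ = ∑ x ∈ T₁, x) (h2 : a + v₂ = ∑ x ∈ T₂, x)
    (h3 : a + v₃ = ∑ x ∈ T₃, x) :
    a ∈ Submodule.span (ZMod 2)
      {z : Fin s → ZMod 2 | ∃ x ∈ X, ∃ y ∈ X, x ≠ y ∧ z = x * y} := by
  have key : ∀ (T T' : Finset (Fin s → ZMod 2)), T ⊆ X → T' ⊆ X → Disjoint T T' →
      (∑ x ∈ T, x) * (∑ x ∈ T', x) ∈ Submodule.span (ZMod 2)
        {z : Fin s → ZMod 2 | ∃ x ∈ X, ∃ y ∈ X, x ≠ y ∧ z = x * y} := by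
    intro T T' hT hT' hd
    rw [Finset.sum_mul_sum]
    refine Submodule.sum_mem _ fun x hx => Submodule.sum_mem _ fun y hy => ?_
    exact Submodule.subset_span
      ⟨x, hT hx, y, hT' hy, fun h => Finset.disjoint_left.mp hd hx (h ▸ hy), rfl⟩
  have e12 := support_disjoint_mul_zero h12
  have e13 := support_disjoint_mul_zero h13
  have e23 := support_disjoint_mul_zero h23
  have ha : a = (a+v₁)*(a+v₂) + (a+v₁)*(a+v₃) + (a+v₂)*(a+v₃) := by
    funext i
    exact zmod2_key (a i) (v₁ i) (v₂ i) (v₃ i)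
      (congrFun e12 i) (congrFun e13 i) (congrFun e23 i)
  rw [h1, h2, h3] at ha
  rw [ha]
  exact Submodule.add_mem _
    (Submodule.add_mem _ (key _ _ hT₁ hT₂ hd12) (key _ _ hT₁ hT₃ hd13))
    (key _ _ hT₂ hT₃ hd23)
end

section
/- If C is a binary 3-server PIR code of length n and dimension s with redundancy r = n - s, then r(r-1) ≥ 2s. -/
set_option maxHeartbeats 1000000

private lemma maj2 : ∀ (A x0 x1 x2 y0 y1 y2 : ZMod 2),
    A = y0 + x0 → A = y1 + x1 → A = y2 + x2 →
    (y0 = 0 ∨ y1 = 0) → (y0 = 0 ∨ y2 = 0) → (y1 = 0 ∨ y2 = 0) →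
    A = x0 * x1 + x0 * x2 + x1 * x2 := by decide

private lemma key (s n : ℕ) (col : Fin n → (Fin s → ZMod 2))
    (hspan : Submodule.span (ZMod 2) (Set.range col) = ⊤)
    (hP : ∀ i : Fin s, ∃ S : Fin 3 → Finset (Fin n),
      Pairwise (Function.onFun Disjoint S) ∧
      ∀ m : Fin 3, ∑ j ∈ S m, col j = Pi.single i 1) :
    2 * s ≤ (n - s) * (n - s - 1) := by
  classical
  obtain ⟨b, hb_sub, hb_span, hb_li⟩ := exists_linearIndependent (ZMod 2) (Set.range col)
  haveI : Finite ↥b := hb_li.finite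
  haveI : Fintype ↥b := Fintype.ofFinite _
  have hsp : ⊤ ≤ Submodule.span (ZMod 2) (Set.range (Subtype.val : b → _)) := by
    rw [Subtype.range_coe, hb_span, hspan]
  set β : Module.Basis ↥b (ZMod 2) (Fin s → ZMod 2) := Module.Basis.mk hb_li hsp with hβ
  have hcard_b : Fintype.card ↥b = s := by
    have h := Module.finrank_eq_card_basis β
    rw [Module.finrank_fin_fun] at h; omega
  have hpick : ∀ v : ↥b, ∃ j : Fin n, col j = ↑v := fun v => hb_sub v.2
  choose ι hι using hpick
  have hι_inj : Function.Injective ι := by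
    intro v v' h
    apply Subtype.ext
    rw [← hι v, ← hι v', h]
  set Jf : Finset (Fin n) := Finset.univ.image ι with hJf
  have hcard_J : Jf.card = s := by
    rw [hJf, Finset.card_image_of_injective _ hι_inj, Finset.card_univ, hcard_b]
  set E := β.equivFun with hE
  set Cc : Fin n → (↥b → ZMod 2) := fun j => E (col j) with hCc
  have hE_basis : ∀ (v w : ↥b), E (↑v) w = if v = w then 1 else 0 := by
    intro v w
    have h : (v : Fin s → ZMod 2) = β v := by rw [hβ, Module.Basis.coe_mk]
    rw [h, hE]
    exact β.equivFun_self v w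
  set Rf : Finset (Fin n) := Jfᶜ with hRf
  set Ψ : Fin n × Fin n → (Fin s → ZMod 2) := fun p => E.symm (Cc p.1 * Cc p.2) with hΨ
  set P : Finset (Fin n × Fin n) := (Rf ×ˢ Rf).filter (fun p => p.1 < p.2) with hPdef
  set D : Finset (Fin s → ZMod 2) := P.image Ψ with hD
  have hmem : ∀ i : Fin s, (Pi.single i 1 : Fin s → ZMod 2) ∈ Submodule.span (ZMod 2) (D : Set _) := by
    intro i
    obtain ⟨S, hdisj, hsum⟩ := hP i
    set H : Fin 3 → (↥b → ZMod 2) := fun m => ∑ j ∈ S m \ Jf, Cc j with hH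
    have hsplit : ∀ m, E (Pi.single i 1) = (∑ j ∈ S m ∩ Jf, Cc j) + H m := by
      intro m
      calc E (Pi.single i 1) = E (∑ j ∈ S m, col j) := by rw [hsum m]
        _ = E ((∑ j ∈ S m ∩ Jf, col j) + ∑ j ∈ S m \ Jf, col j) := by
            rw [Finset.sum_inter_add_sum_sdiff]
        _ = (∑ j ∈ S m ∩ Jf, Cc j) + H m := by
            rw [map_add, map_sum, map_sum]
    have hsys : ∀ (m : Fin 3) (w : ↥b),
        (∑ j ∈ S m ∩ Jf, Cc j) w = if ι w ∈ S m then 1 else 0 := by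
      intro m w
      have h1 : ∀ j ∈ S m ∩ Jf, Cc j w = if j = ι w then 1 else 0 := by
        intro j hj
        obtain ⟨v, -, rfl⟩ := Finset.mem_image.mp (Finset.mem_inter.mp hj).2
        have h2 : Cc (ι v) w = if v = w then 1 else 0 := by
          rw [hCc]; simp only [hι v]; exact hE_basis v w
        rw [h2]
        congr 1
        simp [hι_inj.eq_iff]
      rw [Finset.sum_apply, Finset.sum_congr rfl h1,
        Finset.sum_ite_eq' (S m ∩ Jf) (ι w) (fun _ => 1)]
      have h3 : ι w ∈ Jf := Finset.mem_image_of_mem ι (Finset.mem_univ w)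
      simp [Finset.mem_inter, h3]
    have hmaj : E (Pi.single i 1) = H 0 * H 1 + H 0 * H 2 + H 1 * H 2 := by
      funext w
      have hd : ∀ (m m' : Fin 3), m ≠ m' →
          ((if ι w ∈ S m then (1:ZMod 2) else 0) = 0 ∨
           (if ι w ∈ S m' then (1:ZMod 2) else 0) = 0) := by
        intro m m' hmm'
        by_cases h1 : ι w ∈ S m
        · by_cases h2 : ι w ∈ S m'
          · exact absurd h2 (Finset.disjoint_left.mp (hdisj hmm') h1)
          · right; simp [h2]
        · left; simp [h1]
      have hs : ∀ m : Fin 3, E (Pi.single i 1) w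
          = (if ι w ∈ S m then (1:ZMod 2) else 0) + H m w := by
        intro m
        have := congrFun (hsplit m) w
        rwa [Pi.add_apply, hsys m w] at this
      have := maj2 (E (Pi.single i 1) w) (H 0 w) (H 1 w) (H 2 w) _ _ _
        (hs 0) (hs 1) (hs 2)
        (hd 0 1 (by decide)) (hd 0 2 (by decide)) (hd 1 2 (by decide))
      simpa using this
    have hterm : ∀ (m m' : Fin 3), m ≠ m' → ∀ j ∈ S m \ Jf, ∀ j' ∈ S m' \ Jf,
        E.symm (Cc j * Cc j') ∈ Submodule.span (ZMod 2) (D : Set _) := by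
      intro m m' hmm' j hj j' hj'
      obtain ⟨hjS, hjJ⟩ := Finset.mem_sdiff.mp hj
      obtain ⟨hj'S, hj'J⟩ := Finset.mem_sdiff.mp hj'
      have hjR : j ∈ Rf := Finset.mem_compl.mpr hjJ
      have hj'R : j' ∈ Rf := Finset.mem_compl.mpr hj'J
      have hne : j ≠ j' := by
        intro h; subst h
        exact (Finset.disjoint_left.mp (hdisj hmm') hjS) hj'S
      rcases lt_or_gt_of_ne hne with h | h
      · have hp : ((j, j') : Fin n × Fin n) ∈ P := by
          rw [hPdef]
          exact Finset.mem_filter.mpr ⟨Finset.mem_product.mpr ⟨hjR, hj'R⟩, h⟩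
        have heq : E.symm (Cc j * Cc j') = Ψ (j, j') := by rw [hΨ]
        rw [heq]
        exact Submodule.subset_span (Finset.mem_coe.mpr (Finset.mem_image_of_mem Ψ hp))
      · have hp : ((j', j) : Fin n × Fin n) ∈ P := by
          rw [hPdef]
          exact Finset.mem_filter.mpr ⟨Finset.mem_product.mpr ⟨hj'R, hjR⟩, h⟩
        have heq : E.symm (Cc j * Cc j') = Ψ (j', j) := by rw [hΨ]; simp [mul_comm]
        rw [heq]
        exact Submodule.subset_span (Finset.mem_coe.mpr (Finset.mem_image_of_mem Ψ hp))
    have hexp : (Pi.single i 1 : Fin s → ZMod 2)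
        = (∑ j ∈ S 0 \ Jf, ∑ j' ∈ S 1 \ Jf, E.symm (Cc j * Cc j'))
          + (∑ j ∈ S 0 \ Jf, ∑ j' ∈ S 2 \ Jf, E.symm (Cc j * Cc j'))
          + (∑ j ∈ S 1 \ Jf, ∑ j' ∈ S 2 \ Jf, E.symm (Cc j * Cc j')) := by
      have h0 : (Pi.single i 1 : Fin s → ZMod 2)
          = E.symm (H 0 * H 1 + H 0 * H 2 + H 1 * H 2) := by
        rw [← hmaj, LinearEquiv.symm_apply_apply]
      rw [h0, hH]
      simp only [Finset.sum_mul_sum]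
      rw [map_add, map_add, map_sum, map_sum, map_sum]
      congr 1
      · congr 1
        · exact Finset.sum_congr rfl (fun j _ => map_sum _ _ _)
        · exact Finset.sum_congr rfl (fun j _ => map_sum _ _ _)
      · exact Finset.sum_congr rfl (fun j _ => map_sum _ _ _)
    rw [hexp]
    refine Submodule.add_mem _ (Submodule.add_mem _ ?_ ?_) ?_
    · exact Submodule.sum_mem _ (fun j hj => Submodule.sum_mem _
        (fun j' hj' => hterm 0 1 (by decide) j hj j' hj'))
    · exact Submodule.sum_mem _ (fun j hj => Submodule.sum_mem _
        (fun j' hj' => hterm 0 2 (by decide) j hj j' hj'))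
    · exact Submodule.sum_mem _ (fun j hj => Submodule.sum_mem _
        (fun j' hj' => hterm 1 2 (by decide) j hj j' hj'))
  -- dimension count
  have htop : Submodule.span (ZMod 2) (D : Set (Fin s → ZMod 2)) = ⊤ := by
    refine le_antisymm le_top ?_
    rw [← (Pi.basisFun (ZMod 2) (Fin s)).span_eq, Submodule.span_le]
    rintro x ⟨i, rfl⟩
    rw [Pi.basisFun_apply]
    exact hmem i
  have hsD : s ≤ D.card := by
    have h1 : Module.finrank (ZMod 2)
        (Submodule.span (ZMod 2) (D : Set (Fin s → ZMod 2))) = s := by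
      rw [htop, finrank_top, Module.finrank_fin_fun]
    have h2 := finrank_span_finset_le_card (R := ZMod 2) D
    rw [Set.finrank] at h2
    omega
  have hsP : s ≤ P.card := hsD.trans (Finset.card_image_le)
  -- counting pairs
  set P' : Finset (Fin n × Fin n) := (Rf ×ˢ Rf).filter (fun p => p.2 < p.1) with hP'def
  have hswap : P.card = P'.card := by
    refine Finset.card_bij' (fun p _ => p.swap) (fun p _ => p.swap) ?_ ?_ ?_ ?_
    · intro p hp
      simp only [hPdef, Finset.mem_filter, Finset.mem_product] at hp
      simp only [hP'def, Finset.mem_filter, Finset.mem_product, Prod.fst_swap, Prod.snd_swap]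
      exact ⟨⟨hp.1.2, hp.1.1⟩, hp.2⟩
    · intro p hp
      simp only [hP'def, Finset.mem_filter, Finset.mem_product] at hp
      simp only [hPdef, Finset.mem_filter, Finset.mem_product, Prod.fst_swap, Prod.snd_swap]
      exact ⟨⟨hp.1.2, hp.1.1⟩, hp.2⟩
    · intro p _; exact Prod.swap_swap p
    · intro p _; exact Prod.swap_swap p
  have hdisjPP : Disjoint P P' := by
    rw [Finset.disjoint_left]
    intro p hp hp'
    simp only [hPdef, Finset.mem_filter] at hp
    simp only [hP'def, Finset.mem_filter] at hp'
    exact absurd hp'.2 (lt_asymm hp.2)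
  have hunion : P ∪ P' = Rf.offDiag := by
    ext p
    simp only [Finset.mem_union, hPdef, hP'def, Finset.mem_filter, Finset.mem_product,
      Finset.mem_offDiag]
    constructor
    · rintro (⟨⟨h1, h2⟩, h3⟩ | ⟨⟨h1, h2⟩, h3⟩)
      · exact ⟨h1, h2, ne_of_lt h3⟩
      · exact ⟨h1, h2, (ne_of_lt h3).symm⟩
    · rintro ⟨h1, h2, h3⟩
      rcases lt_or_gt_of_ne h3 with h | h
      · exact Or.inl ⟨⟨h1, h2⟩, h⟩
      · exact Or.inr ⟨⟨h1, h2⟩, h⟩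
  have h2P : 2 * P.card = Rf.card * Rf.card - Rf.card := by
    have := Finset.offDiag_card Rf
    rw [← hunion, Finset.card_union_of_disjoint hdisjPP, ← hswap] at this
    omega
  have hRcard : Rf.card = n - s := by
    rw [hRf, Finset.card_compl, hcard_J, Fintype.card_fin]
  have hmp : (n - s) * (n - s - 1) = (n - s) * (n - s) - (n - s) := by
    have := Nat.mul_pred (n - s) (n - s)
    simpa [Nat.pred_eq_sub_one] using this
  rw [hRcard] at h2P
  omega

/-- A binary 3-server PIR code of length `n` and dimension `s` has redundancy
`r = n - s` satisfying `r(r-1) ≥ 2s`. -/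
theorem stmt_8 (n s : ℕ) (C : Submodule (ZMod 2) (Fin n → ZMod 2))
    (hdim : Module.finrank (ZMod 2) C = s)
    (G : Matrix (Fin s) (Fin n) (ZMod 2))
    (hgen : Submodule.span (ZMod 2) (Set.range G) = C)
    (hrank : G.rank = s)
    (hP : ∀ i : Fin s, ∃ S : Fin 3 → Finset (Fin n),
      Pairwise (Function.onFun Disjoint S) ∧
      ∀ m : Fin 3, ∑ j ∈ S m, (fun i' => G i' j) = Pi.single i 1) :
    2 * s ≤ (n - s) * (n - s - 1) := by
  have hspan : Submodule.span (ZMod 2) (Set.range (fun j i' => G i' j)) = ⊤ := by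
    have h1 : LinearMap.range G.mulVecLin
        = Submodule.span (ZMod 2) (Set.range G.transpose) := Matrix.range_mulVecLin G
    have h2 : Module.finrank (ZMod 2) (LinearMap.range G.mulVecLin) = s := hrank
    rw [h1] at h2
    have h3 := Submodule.eq_top_of_finrank_eq
      (h2.trans (Module.finrank_fin_fun (ZMod 2)).symm)
    exact h3
  exact key s n (fun j i' => G i' j) hspan hP
end

section
/- For every k ≥ 3, if C is a binary k-server PIR code of length n and dimension s with redundancy r = n - s, then r(r-1) ≥ 2s; in particular r = Ω(√s). -/
set_option maxHeartbeats 1000000 in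

/-- For every `k ≥ 3`, a binary `k`-server PIR code of length `n` and dimension
`s` has redundancy `r = n - s` satisfying `r(r-1) ≥ 2s`. -/
theorem stmt_9 (n s k : ℕ) (hk : 3 ≤ k) (C : Submodule (ZMod 2) (Fin n → ZMod 2))
    (hdim : Module.finrank (ZMod 2) C = s)
    (G : Matrix (Fin s) (Fin n) (ZMod 2))
    (hgen : Submodule.span (ZMod 2) (Set.range G) = C)
    (hrank : G.rank = s)
    (hP : ∀ i : Fin s, ∃ S : Fin k → Finset (Fin n),
      Pairwise (Function.onFun Disjoint S) ∧
      ∀ m : Fin k, ∑ j ∈ S m, (fun i' => G i' j) = Pi.single i 1) :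
    2 * s ≤ (n - s) * (n - s - 1) := by
  classical
  set f : (Fin n → ZMod 2) →ₗ[ZMod 2] (Fin s → ZMod 2) := G.mulVecLin with hfdef
  set Kc : Submodule (ZMod 2) (Fin n → ZMod 2) := LinearMap.ker f with hKdef
  set r' : ℕ := Module.finrank (ZMod 2) Kc with hr'def
  -- dimension of the kernel
  have hrn : s + r' = n := by
    have h := LinearMap.finrank_range_add_finrank_ker f
    have h1 : Module.finrank (ZMod 2) (LinearMap.range f) = s := hrank
    rw [h1] at h
    simpa [Module.finrank_pi] using h
  -- basis of the kernel
  let b : Module.Basis (Fin r') (ZMod 2) Kc := Module.finBasis (ZMod 2) Kc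
  let z : Fin r' → (Fin n → ZMod 2) := fun a => (b a : Fin n → ZMod 2)
  have hzker : ∀ a, f (z a) = 0 := fun a => (b a).2
  have hspan : Submodule.span (ZMod 2) (Set.range z) = Kc := by
    have h2 : Set.range z = Kc.subtype '' Set.range ⇑b := by
      rw [← Set.range_comp]; rfl
    rw [h2, ← Submodule.map_span, b.span_eq, Submodule.map_subtype_top]
  -- multiplication is idempotent entrywise over ZMod 2
  have hsq : ∀ x : ZMod 2, x * x = x := by decide
  -- the generating family indexed by pairs a < c
  let ι := Σ bb : Fin r', Fin bb.1
  let gen : ι → (Fin s → ZMod 2) :=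
    fun p => f (z ⟨p.2.1, lt_trans p.2.2 p.1.2⟩ * z p.1)
  let W := Submodule.span (ZMod 2) (Set.range gen)
  have hbase : ∀ a c : Fin r', f (z a * z c) ∈ W := by
    intro a c
    rcases lt_trichotomy a c with h | h | h
    · exact Submodule.subset_span ⟨⟨c, ⟨a.1, h⟩⟩, rfl⟩
    · subst h
      have : z a * z a = z a := by
        funext j; exact hsq (z a j)
      rw [this, hzker a]
      exact W.zero_mem
    · have : z a * z c = z c * z a := mul_comm _ _
      rw [this]
      exact Submodule.subset_span ⟨⟨a, ⟨c.1, h⟩⟩, rfl⟩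
  -- products of kernel elements land in W
  have hright : ∀ (a : Fin r') (v : Fin n → ZMod 2),
      v ∈ Submodule.span (ZMod 2) (Set.range z) → f (z a * v) ∈ W := by
    intro a v hv
    induction hv using Submodule.span_induction with
    | mem y hy => obtain ⟨c, rfl⟩ := hy; exact hbase a c
    | zero => rw [mul_zero, map_zero]; exact W.zero_mem
    | add y y' hy hy' ih ih' =>
        rw [mul_add, map_add]; exact W.add_mem ih ih'
    | smul c y hy ih =>
        rw [mul_smul_comm, map_smul]; exact W.smul_mem _ ih
  have hmem : ∀ u v : Fin n → ZMod 2, u ∈ Kc → v ∈ Kc → f (u * v) ∈ W := by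
    intro u v hu hv
    rw [← hspan] at hu hv
    induction hu using Submodule.span_induction with
    | mem y hy => obtain ⟨a, rfl⟩ := hy; exact hright a v hv
    | zero => rw [zero_mul, map_zero]; exact W.zero_mem
    | add y y' hy hy' ih ih' =>
        rw [add_mul, map_add]; exact W.add_mem ih ih'
    | smul c y hy ih =>
        rw [smul_mul_assoc, map_smul]; exact W.smul_mem _ ih
  -- every standard basis vector of the message space lies in W
  have hsingle : ∀ i : Fin s, (Pi.single i 1 : Fin s → ZMod 2) ∈ W := by
    intro i
    obtain ⟨S, hdisj, hsum⟩ := hP i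
    set m0 : Fin k := ⟨0, by omega⟩ with hm0
    set m1 : Fin k := ⟨1, by omega⟩ with hm1
    set m2 : Fin k := ⟨2, by omega⟩ with hm2
    let x : Fin k → (Fin n → ZMod 2) :=
      fun t j => if j ∈ S t then 1 else 0
    have hxdef : ∀ t j, x t j = if j ∈ S t then 1 else 0 := fun t j => rfl
    have hGx : ∀ t, f (x t) = Pi.single i 1 := by
      intro t
      funext i'
      have h1 := congrFun (hsum t) i'
      rw [Finset.sum_apply] at h1
      show (G.mulVec (x t)) i' = _
      rw [Matrix.mulVec, dotProduct]
      calc (∑ j, G i' j * x t j) = ∑ j, if j ∈ S t then G i' j else 0 := by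
            apply Finset.sum_congr rfl
            intro j _
            by_cases hj : j ∈ S t <;> simp [hxdef t j, hj]
        _ = ∑ j ∈ S t, G i' j := by
            rw [Finset.sum_ite_mem, Finset.univ_inter]
        _ = (Pi.single i 1 : Fin s → ZMod 2) i' := by exact h1
    have hsingle2 : (Pi.single i 1 : Fin s → ZMod 2) + Pi.single i 1 = 0 := by
      rw [← Pi.single_add]
      have : (1 + 1 : ZMod 2) = 0 := by decide
      rw [this, Pi.single_zero]
    have hne01 : m0 ≠ m1 := by
      intro h; have := congrArg Fin.val h; simp [hm0, hm1] at this
    have hne02 : m0 ≠ m2 := by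
      intro h; have := congrArg Fin.val h; simp [hm0, hm2] at this
    have hne12 : m1 ≠ m2 := by
      intro h; have := congrArg Fin.val h; simp [hm1, hm2] at this
    have d01 := Finset.disjoint_left.mp (hdisj hne01)
    have d02 := Finset.disjoint_left.mp (hdisj hne02)
    have d12 := Finset.disjoint_left.mp (hdisj hne12)
    have hu : x m0 + x m1 ∈ Kc := by
      rw [hKdef, LinearMap.mem_ker, map_add, hGx, hGx]
      exact hsingle2
    have hv : x m0 + x m2 ∈ Kc := by
      rw [hKdef, LinearMap.mem_ker, map_add, hGx, hGx]
      exact hsingle2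
    have hprod : (x m0 + x m1) * (x m0 + x m2) = x m0 := by
      funext j
      by_cases h0 : j ∈ S m0
      · have h1 : j ∉ S m1 := fun hh => d01 h0 hh
        have h2 : j ∉ S m2 := fun hh => d02 h0 hh
        simp [Pi.mul_apply, Pi.add_apply, hxdef, h0, h1, h2]
      · by_cases h1 : j ∈ S m1
        · have h2 : j ∉ S m2 := fun hh => d12 h1 hh
          simp [Pi.mul_apply, Pi.add_apply, hxdef, h0, h1, h2]
        · by_cases h2 : j ∈ S m2 <;> simp [Pi.mul_apply, Pi.add_apply, hxdef, h0, h1, h2]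
    have := hmem _ _ hu hv
    rwa [hprod, hGx m0] at this
  -- hence W is everything
  have hTop : W = ⊤ := by
    rw [eq_top_iff, ← (Pi.basisFun (ZMod 2) (Fin s)).span_eq]
    apply Submodule.span_le.mpr
    rintro _ ⟨i, rfl⟩
    rw [Pi.basisFun_apply]
    exact hsingle i
  -- dimension count
  have hW : Module.finrank (ZMod 2) ↥W ≤ Fintype.card ι := finrank_range_le_card gen
  rw [hTop, finrank_top, Module.finrank_pi, Fintype.card_fin] at hW
  have hcard : 2 * Fintype.card ι = r' * (r' - 1) := by
    have h3 : Fintype.card ι = ∑ bb : Fin r', bb.1 := by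
      rw [Fintype.card_sigma]
      simp
    rw [h3, Fin.sum_univ_eq_sum_range (fun i => i) r']
    rw [mul_comm]
    exact Finset.sum_range_id_mul_two r'
  have hns : n - s = r' := by omega
  rw [hns]
  calc 2 * s ≤ 2 * Fintype.card ι := by omega
    _ = r' * (r' - 1) := hcard
end

section
/- Let r be an integer with r(r-1)/2 ≥ s, and let P be an s×r binary matrix whose rows are s distinct vectors of Hamming weight 2. Then the s×(s+r) matrix G = [I_s | P] has property P_3; that is, for every i ∈ [s] there exist 3 pairwise disjoint sets of columns of G each summing to e_i over GF(2). -/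
/-- If `P` is an `s×r` binary matrix with distinct rows of Hamming weight 2
(possible when `r(r-1)/2 ≥ s`), then `G = [I_s | P]` has property `P_3`. -/
theorem stmt_11 (s r : ℕ) (hr : s ≤ r * (r - 1) / 2)
    (P : Matrix (Fin s) (Fin r) (ZMod 2))
    (hinj : Function.Injective fun i => P i)
    (hwt : ∀ i : Fin s, (Finset.univ.filter fun j => P i j ≠ 0).card = 2)
    (G : Matrix (Fin s) (Fin (s + r)) (ZMod 2))
    (hG : ∀ i : Fin s, G i = Fin.append (Pi.single i 1) (P i)) :
    ∀ i : Fin s, ∃ S : Fin 3 → Finset (Fin (s + r)),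
      Pairwise (Function.onFun Disjoint S) ∧
      ∀ m : Fin 3, ∑ j ∈ S m, (fun i' => G i' j) = Pi.single i 1 := by
  intro i
  have h2 : ∀ x : ZMod 2, x ≠ 0 → x = 1 := by decide
  have hcn : ∀ (x : Fin s) (y : Fin r), Fin.castAdd r x ≠ Fin.natAdd s y := by
    intro x y h
    have hx := x.isLt
    have := congrArg Fin.val h
    simp [Fin.castAdd, Fin.natAdd] at this
    omega
  have hci : Function.Injective (Fin.castAdd r : Fin s → Fin (s + r)) := by
    intro x y h
    exact Fin.ext (by simpa using congrArg Fin.val h)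
  obtain ⟨a, b, hab, hset⟩ := Finset.card_eq_two.mp (hwt i)
  have hPa : P i a ≠ 0 := by
    have : a ∈ Finset.univ.filter fun j => P i j ≠ 0 := by rw [hset]; simp
    simpa using this
  have hPb : P i b ≠ 0 := by
    have : b ∈ Finset.univ.filter fun j => P i j ≠ 0 := by rw [hset]; simp
    simpa using this
  have huniq : ∀ i' : Fin s, i' ≠ i → P i' a ≠ 0 → P i' b ≠ 0 → False := by
    intro i' hne ha hb
    apply hne
    apply hinj
    have hsub : ({a, b} : Finset (Fin r)) ⊆ Finset.univ.filter (fun j => P i' j ≠ 0) := by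
      intro j hj
      simp only [Finset.mem_insert, Finset.mem_singleton] at hj
      rcases hj with rfl | rfl <;> simp [ha, hb]
    have hcard : (Finset.univ.filter (fun j => P i' j ≠ 0)).card ≤ ({a, b} : Finset (Fin r)).card := by
      rw [hwt i', Finset.card_insert_of_notMem (by simpa using hab), Finset.card_singleton]
    have heq : ({a, b} : Finset (Fin r)) = Finset.univ.filter (fun j => P i' j ≠ 0) :=
      Finset.eq_of_subset_of_card_le hsub hcard
    show P i' = P i
    funext j
    by_cases hj : j ∈ ({a, b} : Finset (Fin r))
    · have h1 : P i' j ≠ 0 := by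
        have := heq ▸ hj; simpa using this
      have h2' : P i j ≠ 0 := by
        have := hset ▸ hj; simpa using this
      rw [h2 _ h1, h2 _ h2']
    · have h1 : P i' j = 0 := by
        by_contra h
        exact hj (heq ▸ (by simpa using h : j ∈ Finset.univ.filter (fun j => P i' j ≠ 0)))
      have h2' : P i j = 0 := by
        by_contra h
        exact hj (hset ▸ (by simpa using h : j ∈ Finset.univ.filter (fun j => P i j ≠ 0)))
      rw [h1, h2']
  set T : Fin r → Finset (Fin s) := fun c => Finset.univ.filter fun i' => i' ≠ i ∧ P i' c ≠ 0 with hT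
  -- the three sets
  refine ⟨![{Fin.castAdd r i},
            insert (Fin.natAdd s a) ((T a).image (Fin.castAdd r)),
            insert (Fin.natAdd s b) ((T b).image (Fin.castAdd r))], ?_, ?_⟩
  · -- pairwise disjoint
    have d01 : Disjoint ({Fin.castAdd r i} : Finset (Fin (s + r)))
        (insert (Fin.natAdd s a) ((T a).image (Fin.castAdd r))) := by
      simp only [Finset.disjoint_singleton_left, Finset.mem_insert, Finset.mem_image]
      rintro (h | ⟨i', hi', h⟩)
      · exact hcn i a h
      · have := hci h
        simp [hT] at hi'
        exact hi'.1 this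
    have d02 : Disjoint ({Fin.castAdd r i} : Finset (Fin (s + r)))
        (insert (Fin.natAdd s b) ((T b).image (Fin.castAdd r))) := by
      simp only [Finset.disjoint_singleton_left, Finset.mem_insert, Finset.mem_image]
      rintro (h | ⟨i', hi', h⟩)
      · exact hcn i b h
      · have := hci h
        simp [hT] at hi'
        exact hi'.1 this
    have d12 : Disjoint (insert (Fin.natAdd s a) ((T a).image (Fin.castAdd r)))
        (insert (Fin.natAdd s b) ((T b).image (Fin.castAdd r))) := by
      rw [Finset.disjoint_left]
      intro x hx hx'
      simp only [Finset.mem_insert, Finset.mem_image] at hx hx'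
      rcases hx with rfl | ⟨i', hi', rfl⟩
      · rcases hx' with h | ⟨i'', hi'', h⟩
        · have := congrArg Fin.val h
          simp [Fin.natAdd] at this
          exact hab (Fin.ext this)
        · exact hcn i'' a h
      · rcases hx' with h | ⟨i'', hi'', h⟩
        · exact hcn i' b h
        · simp only [hT, Finset.mem_filter] at hi' hi''
          have he : i'' = i' := hci h
          rw [he] at hi''
          exact huniq i' hi'.2.1 hi'.2.2 hi''.2.2
    intro m n hmn
    fin_cases m <;> fin_cases n <;>
      first
        | exact absurd rfl hmn
        | exact d01 | exact d02 | exact d12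
        | exact d01.symm | exact d02.symm | exact d12.symm
  · -- sums
    have hsum : ∀ c : Fin r, P i c ≠ 0 →
        ∑ j ∈ insert (Fin.natAdd s c) ((T c).image (Fin.castAdd r)),
          (fun i' => G i' j) = Pi.single i 1 := by
      intro c hPc
      funext i'
      have hnotmem : Fin.natAdd s c ∉ (T c).image (Fin.castAdd r) := by
        simp only [Finset.mem_image]
        rintro ⟨i'', _, h⟩
        exact hcn i'' c h
      rw [Finset.sum_apply, Finset.sum_insert hnotmem,
        Finset.sum_image (fun x _ y _ h => hci h)]
      have hval : ∀ i'', G i'' (Fin.natAdd s c) = P i'' c := by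
        intro i''; rw [hG i'']; exact Fin.append_right _ _ _
      have hval2 : ∀ (i'' k : Fin s), G i'' (Fin.castAdd r k) = Pi.single (M := fun _ => ZMod 2) k 1 i'' := by
        intro i'' k; rw [hG i''];
        rw [Fin.append_left]
        simp [Pi.single_apply, eq_comm]
      rw [hval]
      simp only [hval2]
      rw [Finset.sum_pi_single]
      by_cases hii : i' = i
      · subst hii
        have : i' ∉ T c := by simp [hT]
        simp [this, h2 _ hPc, Pi.single_apply]
      · by_cases hp : P i' c = 0
        · have : i' ∉ T c := by simp [hT, hp]
          simp [this, hp, Pi.single_apply, hii]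
        · have : i' ∈ T c := by simp [hT, hii, hp]
          rw [h2 _ hp]
          simp [this, Pi.single_apply, hii, CharTwo.add_self_eq_zero]
    intro m
    fin_cases m
    · show (∑ j ∈ ({Fin.castAdd r i} : Finset (Fin (s + r))), fun i' => G i' j) = Pi.single i 1
      rw [Finset.sum_singleton]
      funext i'
      rw [hG i', Fin.append_left]
      simp [Pi.single_apply, eq_comm]
    · exact hsum a hPa
    · exact hsum b hPb
end

section
/- For every s ≥ 1, the minimum redundancy of a binary 3-server PIR code of dimension s equals the smallest integer r such that r(r-1) ≥ 2s, i.e., ρ(s,3) = ⌈√(2s + 1/4) + 1/2⌉. -/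
/-- Property `P_k` for an `s×n` binary matrix. -/
def HasPropertyP (s n k : ℕ) (G : Matrix (Fin s) (Fin n) (ZMod 2)) : Prop :=
  ∀ i : Fin s, ∃ S : Fin k → Finset (Fin n),
    Pairwise (Function.onFun Disjoint S) ∧
    ∀ m : Fin k, ∑ j ∈ S m, (fun i' => G i' j) = Pi.single i 1

lemma zmod2_cases (x : ZMod 2) : x = 0 ∨ x = 1 := by revert x; decide

set_option maxHeartbeats 2000000 in
lemma propertyP_iff {s n : ℕ} (G : Matrix (Fin s) (Fin n) (ZMod 2)) :
    HasPropertyP s n 3 G ↔ ∀ i : Fin s, ∃ u v : Fin n → ZMod 2,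
      G.mulVec u = 0 ∧ G.mulVec v = 0 ∧
      (fun i' => ∑ j, u j * v j * G i' j) = Pi.single i 1 := by
  constructor
  · intro h i
    obtain ⟨S, hdis, hsum⟩ := h i
    have hs' : ∀ m (i' : Fin s), ∑ j ∈ S m, G i' j = (Pi.single i 1 : Fin s → ZMod 2) i' := by
      intro m i'
      have := congrFun (hsum m) i'
      simpa [Finset.sum_apply] using this
    have h01 : Disjoint (S 0) (S 1) := hdis (by decide : (0:Fin 3) ≠ 1)
    have h02 : Disjoint (S 0) (S 2) := hdis (by decide : (0:Fin 3) ≠ 2)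
    have h12 : Disjoint (S 1) (S 2) := hdis (by decide : (1:Fin 3) ≠ 2)
    refine ⟨fun j => if j ∈ S 0 ∪ S 1 then 1 else 0,
            fun j => if j ∈ S 0 ∪ S 2 then 1 else 0, ?_, ?_, ?_⟩
    · funext i'
      have : (G.mulVec fun j => if j ∈ S 0 ∪ S 1 then (1:ZMod 2) else 0) i'
          = ∑ j ∈ S 0 ∪ S 1, G i' j := by
        simp only [Matrix.mulVec, dotProduct, mul_ite, mul_one, mul_zero]
        rw [Finset.sum_ite_mem, Finset.univ_inter]
      rw [this, Finset.sum_union h01, hs', hs', CharTwo.add_self_eq_zero]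
      rfl
    · funext i'
      have : (G.mulVec fun j => if j ∈ S 0 ∪ S 2 then (1:ZMod 2) else 0) i'
          = ∑ j ∈ S 0 ∪ S 2, G i' j := by
        simp only [Matrix.mulVec, dotProduct, mul_ite, mul_one, mul_zero]
        rw [Finset.sum_ite_mem, Finset.univ_inter]
      rw [this, Finset.sum_union h02, hs', hs', CharTwo.add_self_eq_zero]
      rfl
    · funext i'
      have hterm : ∀ j, (if j ∈ S 0 ∪ S 1 then (1:ZMod 2) else 0)
          * (if j ∈ S 0 ∪ S 2 then (1:ZMod 2) else 0) * G i' j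
          = if j ∈ S 0 then G i' j else 0 := by
        intro j
        by_cases h0 : j ∈ S 0 <;> by_cases h1 : j ∈ S 1 <;> by_cases h2 : j ∈ S 2 <;>
          simp_all [Finset.disjoint_left] <;> tauto
      rw [show (∑ j, (if j ∈ S 0 ∪ S 1 then (1:ZMod 2) else 0)
          * (if j ∈ S 0 ∪ S 2 then (1:ZMod 2) else 0) * G i' j)
          = ∑ j, if j ∈ S 0 then G i' j else 0 from Finset.sum_congr rfl fun j _ => hterm j]
      rw [Finset.sum_ite_mem, Finset.univ_inter, hs']
  · intro h i
    obtain ⟨u, v, hu, hv, huv⟩ := h i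
    have huv' : ∀ i', ∑ j, u j * v j * G i' j = (Pi.single i 1 : Fin s → ZMod 2) i' :=
      fun i' => congrFun huv i'
    have hu' : ∀ i', ∑ j, u j * G i' j = 0 := by
      intro i'
      have := congrFun hu i'
      simpa [Matrix.mulVec, dotProduct, mul_comm] using this
    have hv' : ∀ i', ∑ j, v j * G i' j = 0 := by
      intro i'
      have := congrFun hv i'
      simpa [Matrix.mulVec, dotProduct, mul_comm] using this
    classical
    set A := Finset.univ.filter (fun j => u j = 1 ∧ v j = 1) with hA
    set B := Finset.univ.filter (fun j => u j = 1 ∧ v j ≠ 1) with hB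
    set C := Finset.univ.filter (fun j => u j ≠ 1 ∧ v j = 1) with hC
    have dAB : Disjoint A B := Finset.disjoint_left.2 (by
      intro j hj hj'
      rw [hA, Finset.mem_filter] at hj; rw [hB, Finset.mem_filter] at hj'; tauto)
    have dAC : Disjoint A C := Finset.disjoint_left.2 (by
      intro j hj hj'
      rw [hA, Finset.mem_filter] at hj; rw [hC, Finset.mem_filter] at hj'; tauto)
    have dBC : Disjoint B C := Finset.disjoint_left.2 (by
      intro j hj hj'
      rw [hB, Finset.mem_filter] at hj; rw [hC, Finset.mem_filter] at hj'; tauto)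
    have sA : (∑ j ∈ A, fun i' => G i' j) = (Pi.single i 1 : Fin s → ZMod 2) := by
      funext i'
      rw [Finset.sum_apply, ← huv' i', hA, Finset.sum_filter]
      refine Finset.sum_congr rfl fun j _ => ?_
      rcases zmod2_cases (u j) with h1 | h1 <;> rcases zmod2_cases (v j) with h2 | h2 <;>
        simp [h1, h2]
    have sB : (∑ j ∈ B, fun i' => G i' j) = (Pi.single i 1 : Fin s → ZMod 2) := by
      funext i'
      rw [Finset.sum_apply]
      have : ∑ j ∈ B, G i' j = ∑ j, (u j * G i' j + u j * v j * G i' j) := by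
        rw [hB, Finset.sum_filter]
        refine Finset.sum_congr rfl fun j _ => ?_
        rcases zmod2_cases (u j) with h1 | h1 <;> rcases zmod2_cases (v j) with h2 | h2 <;>
          simp [h1, h2, CharTwo.add_self_eq_zero]
      rw [this, Finset.sum_add_distrib, hu' i', huv' i', zero_add]
    have sC : (∑ j ∈ C, fun i' => G i' j) = (Pi.single i 1 : Fin s → ZMod 2) := by
      funext i'
      rw [Finset.sum_apply]
      have : ∑ j ∈ C, G i' j = ∑ j, (v j * G i' j + u j * v j * G i' j) := by
        rw [hC, Finset.sum_filter]
        refine Finset.sum_congr rfl fun j _ => ?_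
        rcases zmod2_cases (u j) with h1 | h1 <;> rcases zmod2_cases (v j) with h2 | h2 <;>
          simp [h1, h2, CharTwo.add_self_eq_zero, mul_comm]
      rw [this, Finset.sum_add_distrib, hv' i', huv' i', zero_add]
    refine ⟨![A, B, C], ?_, ?_⟩
    · intro a b hab
      fin_cases a <;> fin_cases b <;>
        first
          | exact absurd rfl hab
          | exact dAB | exact dAC | exact dBC
          | exact dAB.symm | exact dAC.symm | exact dBC.symm
    · intro m
      fin_cases m
      · exact sA
      · exact sB
      · exact sC


lemma two_mul_card_lt_pairs (r : ℕ) :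
    2 * (Finset.univ.filter (fun p : Fin r × Fin r => p.1 < p.2)).card = r * r - r := by
  classical
  have hswap : (Finset.univ.filter (fun p : Fin r × Fin r => p.1 < p.2)).card
      = (Finset.univ.filter (fun p : Fin r × Fin r => p.2 < p.1)).card := by
    apply Finset.card_bij (fun p _ => (p.2, p.1))
    · intro p hp; simp_all
    · intro p hp q hq h
      exact Prod.ext (congrArg Prod.snd h) (congrArg Prod.fst h)
    · intro q hq
      exact ⟨(q.2, q.1), by simp_all, by simp⟩
  have hunion : Finset.univ.filter (fun p : Fin r × Fin r => p.1 ≠ p.2)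
      = Finset.univ.filter (fun p : Fin r × Fin r => p.1 < p.2)
        ∪ Finset.univ.filter (fun p : Fin r × Fin r => p.2 < p.1) := by
    rw [← Finset.filter_or]
    apply Finset.filter_congr
    intro p _
    constructor
    · intro h; exact lt_or_gt_of_ne h
    · intro h; rcases h with h | h
      · exact ne_of_lt h
      · exact (ne_of_lt h).symm
  have hdisj : Disjoint (Finset.univ.filter (fun p : Fin r × Fin r => p.1 < p.2))
      (Finset.univ.filter (fun p : Fin r × Fin r => p.2 < p.1)) := by
    refine Finset.disjoint_left.2 fun p hp hq => ?_
    simp only [Finset.mem_filter] at hp hq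
    exact absurd (hp.2.trans hq.2) (lt_irrefl _)
  have hcard : (Finset.univ.filter (fun p : Fin r × Fin r => p.1 ≠ p.2)).card = r * r - r := by
    have he : Finset.univ.filter (fun p : Fin r × Fin r => p.1 ≠ p.2)
        = (Finset.univ : Finset (Fin r)).offDiag := by
      ext p; simp [Finset.mem_offDiag]
    rw [he, Finset.offDiag_card, Finset.card_univ, Fintype.card_fin]
  rw [hunion, Finset.card_union_of_disjoint hdisj, ← hswap] at hcard
  omega


lemma zmod2_idem (x : ZMod 2) : x * x = x := by revert x; decide

lemma lower_aux {s r : ℕ} (G : Matrix (Fin s) (Fin (s + r)) (ZMod 2))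
    (h : ∀ i : Fin s, ∃ u v : Fin (s + r) → ZMod 2,
      G.mulVec u = 0 ∧ G.mulVec v = 0 ∧
      (fun i' => ∑ j, u j * v j * G i' j) = Pi.single i 1) :
    2 * s ≤ 2 * (Finset.univ.filter (fun p : Fin r × Fin r => p.1 < p.2)).card := by
  classical
  set L := Matrix.mulVecLin G with hL
  -- every Pi.single i 1 is in the range of L
  have hsingle_range : ∀ i : Fin s, (Pi.single i 1 : Fin s → ZMod 2) ∈ LinearMap.range L := by
    intro i
    obtain ⟨u, v, hu, hv, huv⟩ := h i
    refine ⟨fun j => u j * v j, ?_⟩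
    funext i'
    rw [hL]
    show (G.mulVec fun j => u j * v j) i' = _
    rw [← huv]
    simp only [Matrix.mulVec, dotProduct]
    exact Finset.sum_congr rfl fun j _ => by ring
  have hrange : LinearMap.range L = ⊤ := by
    rw [Submodule.eq_top_iff']
    intro x
    have hx : x = ∑ i, Pi.single i (x i) := (Finset.univ_sum_single x).symm
    rw [hx]
    refine Submodule.sum_mem _ fun i _ => ?_
    have : Pi.single i (x i) = x i • (Pi.single i 1 : Fin s → ZMod 2) := by
      funext i'
      by_cases hii : i' = i <;> simp [Pi.single_apply, hii]
    rw [this]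
    exact Submodule.smul_mem _ _ (hsingle_range i)
  have hrank := LinearMap.finrank_range_add_finrank_ker L
  rw [hrange, finrank_top, Module.finrank_fintype_fun_eq_card, Module.finrank_fintype_fun_eq_card,
    Fintype.card_fin, Fintype.card_fin] at hrank
  have hK : Module.finrank (ZMod 2) (LinearMap.ker L) = r := by omega
  set K := LinearMap.ker L with hKdef
  let d : Module.Basis (Fin r) (ZMod 2) K := Module.finBasisOfFinrankEq (ZMod 2) K hK
  have hker0 : ∀ a : Fin r, ∀ i', ∑ j, ((d a : K) : Fin (s + r) → ZMod 2) j * G i' j = 0 := by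
    intro a i'
    have hm : ((d a : K) : Fin (s + r) → ZMod 2) ∈ LinearMap.ker L := (d a).2
    rw [LinearMap.mem_ker, hL, Matrix.mulVecLin_apply] at hm
    have h3 := congrFun hm i'
    simp only [Matrix.mulVec, dotProduct, Pi.zero_apply] at h3
    rw [← h3]
    exact Finset.sum_congr rfl fun j _ => mul_comm _ _
  set w : Fin r × Fin r → (Fin s → ZMod 2) :=
    fun p => fun i' => ∑ j, ((d p.1 : K) : Fin (s + r) → ZMod 2) j
      * ((d p.2 : K) : Fin (s + r) → ZMod 2) j * G i' j with hw
  set T : Finset (Fin s → ZMod 2) :=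
    (Finset.univ.filter (fun p : Fin r × Fin r => p.1 < p.2)).image w with hT
  set W := Submodule.span (ZMod 2) (T : Set (Fin s → ZMod 2)) with hW
  clear_value w
  have wdiag : ∀ a : Fin r, w (a, a) = 0 := by
    intro a
    funext i'
    simp only [hw, Pi.zero_apply]
    rw [← hker0 a i']
    exact Finset.sum_congr rfl fun j _ => by rw [zmod2_idem]
  have wsymm : ∀ a b : Fin r, w (a, b) = w (b, a) := by
    intro a b
    funext i'
    simp only [hw]
    exact Finset.sum_congr rfl fun j _ => by ring
  have wmem : ∀ a b : Fin r, w (a, b) ∈ W := by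
    intro a b
    rcases lt_trichotomy a b with hab | hab | hab
    · exact Submodule.subset_span (Finset.mem_coe.2 (Finset.mem_image.2
        ⟨(a, b), Finset.mem_filter.2 ⟨Finset.mem_univ _, hab⟩, rfl⟩))
    · rw [← hab, wdiag a]; exact Submodule.zero_mem _
    · rw [wsymm]
      exact Submodule.subset_span (Finset.mem_coe.2 (Finset.mem_image.2
        ⟨(b, a), Finset.mem_filter.2 ⟨Finset.mem_univ _, hab⟩, rfl⟩))
  have hsingle_mem : ∀ i : Fin s, (Pi.single i 1 : Fin s → ZMod 2) ∈ W := by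
    intro i
    obtain ⟨u, v, hu, hv, huv⟩ := h i
    have huK : u ∈ K := by rw [hKdef, LinearMap.mem_ker]; exact hu
    have hvK : v ∈ K := by rw [hKdef, LinearMap.mem_ker]; exact hv
    set c := d.repr ⟨u, huK⟩ with hc
    set c' := d.repr ⟨v, hvK⟩ with hc'
    have hu_exp : ∀ j, u j = ∑ a, c a * ((d a : K) : Fin (s + r) → ZMod 2) j := by
      intro j
      have : ((⟨u, huK⟩ : K) : Fin (s + r) → ZMod 2) = ∑ a, c a • ((d a : K) : Fin (s + r) → ZMod 2) := by
        conv_lhs => rw [← d.sum_repr ⟨u, huK⟩]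
        push_cast [Submodule.coe_sum]
        rfl
      have := congrFun this j
      simpa [Finset.sum_apply] using this
    have hv_exp : ∀ j, v j = ∑ b, c' b * ((d b : K) : Fin (s + r) → ZMod 2) j := by
      intro j
      have : ((⟨v, hvK⟩ : K) : Fin (s + r) → ZMod 2) = ∑ b, c' b • ((d b : K) : Fin (s + r) → ZMod 2) := by
        conv_lhs => rw [← d.sum_repr ⟨v, hvK⟩]
        push_cast [Submodule.coe_sum]
        rfl
      have := congrFun this j
      simpa [Finset.sum_apply] using this
    have key : (Pi.single i 1 : Fin s → ZMod 2)
        = ∑ a, ∑ b, (c a * c' b) • w (a, b) := by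
      rw [← huv]
      funext i'
      rw [Finset.sum_apply]
      have step1 : ∀ j, u j * v j * G i' j
          = ∑ a, ∑ b, c a * ((d a : K) : Fin (s + r) → ZMod 2) j
            * (c' b * ((d b : K) : Fin (s + r) → ZMod 2) j) * G i' j := by
        intro j
        rw [hu_exp j, hv_exp j, Finset.sum_mul_sum, Finset.sum_mul]
        refine Finset.sum_congr rfl fun a _ => ?_
        rw [Finset.sum_mul]
      calc ∑ j, u j * v j * G i' j
          = ∑ j, ∑ a, ∑ b, c a * ((d a : K) : Fin (s + r) → ZMod 2) j
            * (c' b * ((d b : K) : Fin (s + r) → ZMod 2) j) * G i' j :=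
            Finset.sum_congr rfl fun j _ => step1 j
        _ = ∑ a, ∑ j, ∑ b, c a * ((d a : K) : Fin (s + r) → ZMod 2) j
            * (c' b * ((d b : K) : Fin (s + r) → ZMod 2) j) * G i' j := Finset.sum_comm
        _ = ∑ a, ∑ b, ∑ j, c a * ((d a : K) : Fin (s + r) → ZMod 2) j
            * (c' b * ((d b : K) : Fin (s + r) → ZMod 2) j) * G i' j :=
            Finset.sum_congr rfl fun a _ => Finset.sum_comm
        _ = ∑ a, ∑ b, (c a * c' b) * w (a, b) i' := by
            refine Finset.sum_congr rfl fun a _ => Finset.sum_congr rfl fun b _ => ?_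
            simp only [hw, Finset.mul_sum]
            exact Finset.sum_congr rfl fun j _ => by ring
        _ = ∑ a, (∑ b, (c a * c' b) • w (a, b)) i' := by
            simp [Finset.sum_apply]
    rw [key]
    exact Submodule.sum_mem _ fun a _ => Submodule.sum_mem _ fun b _ =>
      Submodule.smul_mem _ _ (wmem a b)
  have hWtop : W = ⊤ := by
    rw [Submodule.eq_top_iff']
    intro x
    have hx : x = ∑ i, Pi.single i (x i) := (Finset.univ_sum_single x).symm
    rw [hx]
    refine Submodule.sum_mem _ fun i _ => ?_
    have : Pi.single i (x i) = x i • (Pi.single i 1 : Fin s → ZMod 2) := by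
      funext i'
      by_cases hii : i' = i <;> simp [Pi.single_apply, hii]
    rw [this]
    exact Submodule.smul_mem _ _ (hsingle_mem i)
  have hs_le : s ≤ T.card := by
    have h1 : Module.finrank (ZMod 2) W ≤ T.card := by
      rw [hW]
      exact finrank_span_finset_le_card T
    rw [hWtop, finrank_top, Module.finrank_fintype_fun_eq_card, Fintype.card_fin] at h1
    exact h1
  have h2 : T.card ≤ (Finset.univ.filter (fun p : Fin r × Fin r => p.1 < p.2)).card :=
    Finset.card_image_le
  omega


lemma upper_aux {s r : ℕ}
    (hsr : s ≤ (Finset.univ.filter (fun p : Fin r × Fin r => p.1 < p.2)).card) :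
    ∃ G : Matrix (Fin s) (Fin (s + r)) (ZMod 2),
      ∀ i : Fin s, ∃ u v : Fin (s + r) → ZMod 2,
        G.mulVec u = 0 ∧ G.mulVec v = 0 ∧
        (fun i' => ∑ j, u j * v j * G i' j) = Pi.single i 1 := by
  classical
  have hcard : Fintype.card (Fin s) ≤ Fintype.card {p : Fin r × Fin r // p.1 < p.2} := by
    rw [Fintype.card_fin, Fintype.card_subtype]
    exact hsr
  obtain ⟨f⟩ := Function.Embedding.nonempty_of_card_le hcard
  set P : Fin s → Fin r → ZMod 2 :=
    fun i c => if c = (f i).1.1 ∨ c = (f i).1.2 then 1 else 0 with hP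
  refine ⟨Matrix.of fun i j =>
    Fin.addCases (fun j0 : Fin s => if i = j0 then (1:ZMod 2) else 0) (fun c => P i c) j, ?_⟩
  intro i
  have hPi1 : P i (f i).1.1 = 1 := by rw [hP]; simp
  have hPi2 : P i (f i).1.2 = 1 := by rw [hP]; simp
  have hPP : ∀ i', P i' (f i).1.1 * P i' (f i).1.2 = (Pi.single i 1 : Fin s → ZMod 2) i' := by
    intro i'
    by_cases hii : i' = i
    · subst hii
      rw [hPi1, hPi2, Pi.single_eq_same, one_mul]
    · rw [Pi.single_eq_of_ne hii]
      have hne : ¬(((f i).1.1 = (f i').1.1 ∨ (f i).1.1 = (f i').1.2)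
          ∧ ((f i).1.2 = (f i').1.1 ∨ (f i).1.2 = (f i').1.2)) := by
        rintro ⟨h1 | h1, h2 | h2⟩
        · exact (f i).2.ne (h1.trans h2.symm)
        · exact hii (f.injective (Subtype.ext (Prod.ext h1 h2))).symm
        · have hxy := (f i').2
          rw [← h2, ← h1] at hxy
          exact absurd hxy (not_lt.2 (le_of_lt (f i).2))
        · exact (f i).2.ne (h1.trans h2.symm)
      rw [hP]
      simp only
      split_ifs with hc1 hc2
      · exact absurd ⟨hc1, hc2⟩ hne
      · exact one_mul 0
      all_goals exact zero_mul _
  refine ⟨fun j => Fin.addCases (fun j0 : Fin s => P j0 (f i).1.1)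
      (fun c => if c = (f i).1.1 then 1 else 0) j,
    fun j => Fin.addCases (fun j0 : Fin s => P j0 (f i).1.2)
      (fun c => if c = (f i).1.2 then 1 else 0) j, ?_, ?_, ?_⟩
  · funext i'
    simp only [Matrix.mulVec, dotProduct, Matrix.of_apply, Pi.zero_apply]
    rw [Fin.sum_univ_add]
    simp only [Fin.addCases_left, Fin.addCases_right, ite_mul, mul_ite, one_mul, zero_mul,
      mul_one, mul_zero]
    rw [Finset.sum_ite_eq, Finset.sum_ite_eq']
    simp [CharTwo.add_self_eq_zero]
  · funext i'
    simp only [Matrix.mulVec, dotProduct, Matrix.of_apply, Pi.zero_apply]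
    rw [Fin.sum_univ_add]
    simp only [Fin.addCases_left, Fin.addCases_right, ite_mul, mul_ite, one_mul, zero_mul,
      mul_one, mul_zero]
    rw [Finset.sum_ite_eq, Finset.sum_ite_eq']
    simp [CharTwo.add_self_eq_zero]
  · funext i'
    simp only [Matrix.of_apply]
    rw [Fin.sum_univ_add]
    simp only [Fin.addCases_left, Fin.addCases_right, ite_mul, mul_ite, one_mul, zero_mul,
      mul_one, mul_zero]
    have h2 : (∑ c : Fin r, if c = (f i).1.2 then (if c = (f i).1.1 then P i' c else 0) else 0)
        = 0 := by
      refine Finset.sum_eq_zero fun c _ => ?_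
      split_ifs with hc1 hc2
      · exact absurd (hc2.symm.trans hc1) (f i).2.ne
      · rfl
      · rfl
    rw [Finset.sum_ite_eq, h2, add_zero]
    simp only [Finset.mem_univ, if_true]
    exact hPP i'


lemma nat_mul_pred (r : ℕ) : r * (r - 1) = r * r - r := by
  cases r with
  | zero => rfl
  | succ n => rw [Nat.succ_sub_one, Nat.mul_succ, Nat.add_sub_cancel]

lemma lower_bound {s r : ℕ} (G : Matrix (Fin s) (Fin (s + r)) (ZMod 2))
    (h : HasPropertyP s (s + r) 3 G) : 2 * s ≤ r * (r - 1) := by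
  have h2 := lower_aux G ((propertyP_iff G).1 h)
  rw [two_mul_card_lt_pairs] at h2
  rw [nat_mul_pred]
  omega

/-- Minimal redundancy of `k`-server PIR codes of dimension `s`. -/
noncomputable def rho (s k : ℕ) : ℕ :=
  sInf {r | ∃ G : Matrix (Fin s) (Fin (s + r)) (ZMod 2), HasPropertyP s (s + r) k G}

/-- `ρ(s,3)` equals the smallest `r` with `r(r-1) ≥ 2s`, which is
`⌈√(2s + 1/4) + 1/2⌉`. -/
theorem stmt_12 (s : ℕ) (hs : 1 ≤ s) :
    rho s 3 = sInf {r : ℕ | 2 * s ≤ r * (r - 1)} ∧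
    (rho s 3 : ℤ) = ⌈Real.sqrt (2 * s + 1 / 4) + 1 / 2⌉ := by
  set Q : Set ℕ := {r : ℕ | 2 * s ≤ r * (r - 1)} with hQ
  have hQne : Q.Nonempty := by
    refine ⟨2 * s + 1, ?_⟩
    rw [hQ, Set.mem_setOf_eq, Nat.add_sub_cancel]
    exact Nat.le_mul_of_pos_left _ (by omega)
  set m := sInf Q with hm
  have hmQ : 2 * s ≤ m * (m - 1) := Nat.sInf_mem hQne
  have hm2 : 2 ≤ m := by
    by_contra hc
    push_neg at hc
    have h0 : m * (m - 1) = 0 := by interval_cases m <;> rfl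
    omega
  have hmA : m ∈ {r | ∃ G : Matrix (Fin s) (Fin (s + r)) (ZMod 2),
      HasPropertyP s (s + r) 3 G} := by
    have hcard : s ≤ (Finset.univ.filter (fun p : Fin m × Fin m => p.1 < p.2)).card := by
      have := two_mul_card_lt_pairs m
      have := nat_mul_pred m
      omega
    obtain ⟨G, hG⟩ := upper_aux hcard
    exact ⟨G, (propertyP_iff G).2 hG⟩
  have h1 : rho s 3 = m := by
    apply le_antisymm
    · exact Nat.sInf_le hmA
    · refine le_csInf ⟨m, hmA⟩ fun b hb => ?_
      obtain ⟨G, hG⟩ := hb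
      exact Nat.sInf_le (lower_bound G hG)
  have hnot : ¬ (2 * s ≤ (m - 1) * (m - 1 - 1)) := by
    intro hcon
    have hmem : m - 1 ∈ Q := hcon
    have := Nat.sInf_le hmem
    omega
  obtain ⟨k, hk⟩ : ∃ k : ℕ, m = k + 2 := ⟨m - 2, by omega⟩
  have hq1 : 2 * s ≤ (k + 2) * (k + 1) := by
    rw [hk] at hmQ
    simpa using hmQ
  have hq2 : (k + 1) * k + 1 ≤ 2 * s := by
    rw [hk] at hnot
    have he : (k + 2 - 1) * (k + 2 - 1 - 1) = (k + 1) * k := rfl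
    rw [he] at hnot
    omega
  have hc1 : (2 * (s:ℝ)) ≤ ((k:ℝ) + 2) * ((k:ℝ) + 1) := by exact_mod_cast hq1
  have hc2 : ((k:ℝ) + 1) * (k:ℝ) + 1 ≤ 2 * (s:ℝ) := by exact_mod_cast hq2
  have hs1 : Real.sqrt (2 * (s:ℝ) + 1 / 4) ≤ (k:ℝ) + 3/2 := by
    rw [show ((k:ℝ) + 3/2) = Real.sqrt (((k:ℝ) + 3/2)^2) from
      (Real.sqrt_sq (by positivity)).symm]
    apply Real.sqrt_le_sqrt
    nlinarith
  have hs2 : (k:ℝ) + 1/2 < Real.sqrt (2 * (s:ℝ) + 1 / 4) := by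
    have hlt : ((k:ℝ) + 1/2)^2 < 2 * (s:ℝ) + 1 / 4 := by nlinarith
    have := Real.sqrt_lt_sqrt (by positivity) hlt
    rwa [Real.sqrt_sq (by positivity)] at this
  refine ⟨h1, ?_⟩
  rw [h1]
  symm
  rw [Int.ceil_eq_iff]
  constructor
  · push_cast [hk]
    linarith
  · push_cast [hk]
    linarith
end

section
/- Every binary 3-server PIR code of dimension s has length n ≥ s + ⌈√(2s + 1/4) + 1/2⌉; hence the rate of a 3-server PIR code of dimension s is at most s/(s + √(2s)) and tends to 1 no faster than 1 - Θ(1/√s). -/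
open Finset

namespace Stmt17Aux

variable {n s : ℕ}

/-- The "Schur product" form associated to the columns of `G`. -/
def beta (G : Matrix (Fin s) (Fin n) (ZMod 2)) (a b : Fin n → ZMod 2) : Fin s → ZMod 2 :=
  fun i => (∑ j, G i j * a j) * (∑ k, G i k * b k) + ∑ j, a j * b j * G i j

variable (G : Matrix (Fin s) (Fin n) (ZMod 2))

lemma zmod2_mul_self (x : ZMod 2) : x * x = x := by revert x; decide

lemma zmod2_add_self (x : ZMod 2) : x + x = 0 := by revert x; decide

lemma zmod2_cases (x : ZMod 2) : x = 0 ∨ x = 1 := by revert x; decide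

lemma beta_comm (a b : Fin n → ZMod 2) : beta G a b = beta G b a := by
  funext i
  unfold beta
  rw [mul_comm]
  congr 1
  exact Finset.sum_congr rfl fun j _ => by ring

lemma beta_zero_left (b : Fin n → ZMod 2) : beta G 0 b = 0 := by
  funext i; simp [beta]

lemma beta_zero_right (a : Fin n → ZMod 2) : beta G a 0 = 0 := by
  rw [beta_comm]; exact beta_zero_left G a

lemma beta_add_left (a a' b : Fin n → ZMod 2) :
    beta G (a + a') b = beta G a b + beta G a' b := by
  funext i
  simp only [beta, Pi.add_apply, mul_add, add_mul, Finset.sum_add_distrib]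
  ring

lemma beta_add_right (a b b' : Fin n → ZMod 2) :
    beta G a (b + b') = beta G a b + beta G a b' := by
  rw [beta_comm, beta_add_left, beta_comm G b a, beta_comm G b' a]

lemma beta_smul_left (c : ZMod 2) (a b : Fin n → ZMod 2) :
    beta G (c • a) b = c • beta G a b := by
  rcases zmod2_cases c with h | h <;> subst h
  · simp [beta_zero_left]
  · simp

lemma beta_smul_right (c : ZMod 2) (a b : Fin n → ZMod 2) :
    beta G a (c • b) = c • beta G a b := by
  rw [beta_comm, beta_smul_left, beta_comm]

lemma beta_self (a : Fin n → ZMod 2) : beta G a a = 0 := by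
  funext i
  simp only [beta, zmod2_mul_self]
  rw [show (∑ j, a j * G i j) = ∑ j, G i j * a j from
    Finset.sum_congr rfl fun j _ => mul_comm _ _, zmod2_add_self]
  simp

lemma beta_of_disjoint (a b : Fin n → ZMod 2) (h : ∀ j, a j * b j = 0) :
    beta G a b = fun i => (∑ j, G i j * a j) * (∑ k, G i k * b k) := by
  funext i
  simp only [beta]
  have hz : ∑ j, a j * b j * G i j = 0 :=
    Finset.sum_eq_zero fun j _ => by rw [h j, zero_mul]
  rw [hz, add_zero]


lemma stmt17_arith (n s r : ℕ) (hs : 1 ≤ s) (hnr : n = s + r) (hr2 : 2 ≤ r)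
    (hkey : 2 * s ≤ r * (r - 1)) :
    (s : ℤ) + ⌈Real.sqrt (2 * s + 1 / 4) + 1 / 2⌉ ≤ (n : ℤ) ∧
    (s : ℝ) / n ≤ (s : ℝ) / (s + Real.sqrt (2 * s)) := by
  have hr2R : (2 : ℝ) ≤ (r : ℝ) := by exact_mod_cast hr2
  have hrr : (2 * s : ℝ) ≤ (r : ℝ) * ((r : ℝ) - 1) := by
    have h2 : ((r * (r - 1) : ℕ) : ℝ) = (r : ℝ) * ((r : ℝ) - 1) := by
      push_cast [Nat.cast_sub (by omega : 1 ≤ r)]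
      ring
    calc (2 * s : ℝ) = ((2 * s : ℕ) : ℝ) := by push_cast; ring
    _ ≤ ((r * (r - 1) : ℕ) : ℝ) := Nat.cast_le.mpr hkey
    _ = _ := h2
  constructor
  · have hsq : Real.sqrt (2 * s + 1 / 4) + 1 / 2 ≤ (r : ℝ) := by
      have h1 : Real.sqrt (2 * s + 1 / 4) ≤ (r : ℝ) - 1 / 2 := by
        have h2 : (2 * s + 1 / 4 : ℝ) ≤ ((r : ℝ) - 1 / 2) ^ 2 := by nlinarith
        calc Real.sqrt (2 * s + 1 / 4) ≤ Real.sqrt (((r : ℝ) - 1 / 2) ^ 2) :=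
              Real.sqrt_le_sqrt h2
        _ = (r : ℝ) - 1 / 2 := by
              rw [Real.sqrt_sq (by linarith : (0:ℝ) ≤ (r : ℝ) - 1/2)]
      linarith
    have hceil : (⌈Real.sqrt (2 * s + 1 / 4) + 1 / 2⌉ : ℤ) ≤ (r : ℤ) := by
      apply Int.ceil_le.mpr
      push_cast
      exact hsq
    have hn : (n : ℤ) = (s : ℤ) + (r : ℤ) := by exact_mod_cast hnr
    omega
  · have h0 : (0 : ℝ) < (s : ℝ) + Real.sqrt (2 * s) := by
      have : (1 : ℝ) ≤ (s : ℝ) := by exact_mod_cast hs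
      nlinarith [Real.sqrt_nonneg (2 * (s : ℝ))]
    have hle : (s : ℝ) + Real.sqrt (2 * s) ≤ (n : ℝ) := by
      have h1 : Real.sqrt (2 * s) ≤ (r : ℝ) := by
        have h2 : (2 * s : ℝ) ≤ (r : ℝ) ^ 2 := by nlinarith
        calc Real.sqrt (2 * s) ≤ Real.sqrt ((r : ℝ) ^ 2) := Real.sqrt_le_sqrt h2
        _ = (r : ℝ) := Real.sqrt_sq (by positivity)
      have h3 : (n : ℝ) = (s : ℝ) + (r : ℝ) := by exact_mod_cast hnr
      linarith
    exact div_le_div_of_nonneg_left (by positivity) h0 hle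

end Stmt17Aux

open Stmt17Aux

/-- Every binary 3-server PIR code of dimension `s` has length
`n ≥ s + ⌈√(2s+1/4) + 1/2⌉`; hence its rate is at most `s/(s + √(2s))`. -/
theorem stmt_17 (n s : ℕ) (hs : 1 ≤ s) (C : Submodule (ZMod 2) (Fin n → ZMod 2))
    (hdim : Module.finrank (ZMod 2) C = s)
    (G : Matrix (Fin s) (Fin n) (ZMod 2))
    (hgen : Submodule.span (ZMod 2) (Set.range G) = C)
    (hrank : G.rank = s)
    (hP : ∀ i : Fin s, ∃ S : Fin 3 → Finset (Fin n),
      Pairwise (Function.onFun Disjoint S) ∧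
      ∀ m : Fin 3, ∑ j ∈ S m, (fun i' => G i' j) = Pi.single i 1) :
    (s : ℤ) + ⌈Real.sqrt (2 * s + 1 / 4) + 1 / 2⌉ ≤ (n : ℤ) ∧
    (s : ℝ) / n ≤ (s : ℝ) / (s + Real.sqrt (2 * s)) := by
  classical
  -- the kernel of the column map
  set K : Submodule (ZMod 2) (Fin n → ZMod 2) := LinearMap.ker G.mulVecLin with hKdef
  have hns : s ≤ n := hrank ▸ G.rank_le_width
  -- dimension of the kernel
  have hrankdef : G.rank = Module.finrank (ZMod 2) (LinearMap.range G.mulVecLin) := rfl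
  have hdimsum := LinearMap.finrank_range_add_finrank_ker G.mulVecLin
  rw [Module.finrank_fintype_fun_eq_card, Fintype.card_fin, ← hrankdef, hrank] at hdimsum
  set t : ℕ := Module.finrank (ZMod 2) K with htdef
  have htval : t = n - s := by omega
  -- a basis of the kernel
  set bas := Module.finBasis (ZMod 2) K with hbas
  set y : Fin t → (Fin n → ZMod 2) := fun l => (bas l : Fin n → ZMod 2) with hy
  have hyspan : ∀ d ∈ K, d ∈ Submodule.span (ZMod 2) (Set.range y) := by
    intro d hd
    have h1 : (⟨d, hd⟩ : K) ∈ Submodule.span (ZMod 2) (Set.range bas) := by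
      rw [Module.Basis.span_eq]; trivial
    have h2 := Submodule.mem_map_of_mem (f := K.subtype) h1
    rw [Submodule.map_span, ← Set.range_comp] at h2
    exact h2
  -- the span of the pairwise products of basis elements
  set g : Sym2 (Fin t) → (Fin s → ZMod 2) :=
    Sym2.lift ⟨fun l m => beta G (y l) (y m), fun l m => beta_comm G (y l) (y m)⟩ with hg
  set T : Finset (Fin s → ZMod 2) := (Finset.univ.offDiag.image Sym2.mk.uncurry).image g with hT
  set W : Submodule (ZMod 2) (Fin s → ZMod 2) := Submodule.span (ZMod 2) (T : Set (Fin s → ZMod 2)) with hW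
  have hmemW : ∀ a b : Fin n → ZMod 2, a ∈ K → b ∈ K → beta G a b ∈ W := by
    intro a b ha hb
    refine Submodule.span_induction₂ (p := fun x z _ _ => beta G x z ∈ W)
      ?_ ?_ ?_ ?_ ?_ ?_ ?_ (hyspan a ha) (hyspan b hb)
    · rintro x z ⟨l, rfl⟩ ⟨m, rfl⟩
      by_cases hlm : l = m
      · subst hlm; rw [beta_self]; exact zero_mem W
      · apply Submodule.subset_span
        have hmem : Sym2.mk l m ∈ Finset.univ.offDiag.image Sym2.mk.uncurry :=
          Finset.mem_image.mpr ⟨(l, m), Finset.mem_offDiag.mpr ⟨Finset.mem_univ _, Finset.mem_univ _, hlm⟩, rfl⟩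
        have : g (Sym2.mk l m) = beta G (y l) (y m) := by simp [hg]
        rw [← this]
        exact Finset.mem_coe.mpr (Finset.mem_image_of_mem g hmem)
    · intro z _; rw [beta_zero_left]; exact zero_mem W
    · intro x _; rw [beta_zero_right]; exact zero_mem W
    · intro x x' z _ _ _ h1 h2; rw [beta_add_left]; exact add_mem h1 h2
    · intro x z z' _ _ _ h1 h2; rw [beta_add_right]; exact add_mem h1 h2
    · intro c x z _ _ h1; rw [beta_smul_left]; exact Submodule.smul_mem W c h1
    · intro c x z _ _ h1; rw [beta_smul_right]; exact Submodule.smul_mem W c h1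
  -- each standard basis vector is in W
  have hsingle : ∀ i : Fin s, Pi.single i 1 ∈ W := by
    intro i
    obtain ⟨S, hdisj, hsum⟩ := hP i
    set a : Fin 3 → (Fin n → ZMod 2) := fun m j => if j ∈ S m then 1 else 0 with ha
    have hφ : ∀ m, G.mulVec (a m) = Pi.single i 1 := by
      intro m
      funext i'
      have : G.mulVec (a m) i' = ∑ j, G i' j * a m j := rfl
      rw [this]
      have h1 : ∑ j, G i' j * a m j = ∑ j ∈ S m, G i' j := by
        have he : ∀ j, G i' j * a m j = if j ∈ S m then G i' j else 0 := fun j => by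
          by_cases hj : j ∈ S m <;> simp [ha, hj]
        simp only [he]
        rw [Finset.sum_ite_mem, Finset.univ_inter]
      rw [h1, ← congrFun (hsum m) i', Finset.sum_apply]
    have hφ' : ∀ m, ∀ i', ∑ j, G i' j * a m j = (Pi.single i 1 : Fin s → ZMod 2) i' := by
      intro m i'; exact congrFun (hφ m) i'
    have hdisj' : ∀ m m', m ≠ m' → ∀ j, a m j * a m' j = 0 := by
      intro m m' hmm j
      by_cases h1 : j ∈ S m
      · have h2 : j ∉ S m' := Finset.disjoint_left.mp (hdisj hmm) h1
        simp [ha, h1, h2]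
      · simp [ha, h1]
    have hbeta : ∀ m m', m ≠ m' → beta G (a m) (a m') = Pi.single i 1 := by
      intro m m' hmm
      rw [beta_of_disjoint G _ _ (hdisj' m m' hmm)]
      funext i'
      rw [hφ' m i', hφ' m' i', zmod2_mul_self]
    -- the two kernel elements
    have hK1 : a 0 + a 1 ∈ K := by
      rw [hKdef, LinearMap.mem_ker, Matrix.mulVecLin_apply, Matrix.mulVec_add, hφ 0, hφ 1]
      funext i'; exact zmod2_add_self _
    have hK2 : a 0 + a 2 ∈ K := by
      rw [hKdef, LinearMap.mem_ker, Matrix.mulVecLin_apply, Matrix.mulVec_add, hφ 0, hφ 2]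
      funext i'; exact zmod2_add_self _
    have hcalc : beta G (a 0 + a 1) (a 0 + a 2) = Pi.single i 1 := by
      rw [beta_add_left, beta_add_right, beta_add_right, beta_self,
        hbeta 0 2 (by decide), hbeta 1 0 (by decide), hbeta 1 2 (by decide)]
      funext i'
      simp only [Pi.add_apply, Pi.zero_apply, zero_add]
      rw [← add_assoc, zmod2_add_self, zero_add]
    rw [← hcalc]
    exact hmemW _ _ hK1 hK2
  -- hence W is everything, so s ≤ card T ≤ t.choose 2
  have hWtop : W = ⊤ := by
    rw [eq_top_iff, ← (Pi.basisFun (ZMod 2) (Fin s)).span_eq]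
    apply Submodule.span_le.mpr
    rintro v ⟨i, rfl⟩
    rw [Pi.basisFun_apply]
    exact hsingle i
  have hsled : s ≤ T.card := by
    have h1 : Module.finrank (ZMod 2) (Fin s → ZMod 2) = s := by
      rw [Module.finrank_fintype_fun_eq_card, Fintype.card_fin]
    have h2 : Module.finrank (ZMod 2) W ≤ T.card := finrank_span_finset_le_card T
    rw [hWtop, finrank_top, h1] at h2
    exact h2
  have hTcard : T.card ≤ t.choose 2 := by
    calc T.card ≤ (Finset.univ.offDiag.image (Sym2.mk (α := Fin t)).uncurry).card :=
          Finset.card_image_le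
    _ = (Finset.univ : Finset (Fin t)).card.choose 2 := Sym2.card_image_offDiag _
    _ = t.choose 2 := by rw [Finset.card_univ, Fintype.card_fin]
  have hkey : 2 * s ≤ t * (t - 1) := by
    calc 2 * s ≤ 2 * t.choose 2 := by omega
    _ = t.choose 2 * 2 := by ring
    _ ≤ t * (t - 1) := by rw [Nat.choose_two_right]; exact Nat.div_mul_le_self _ _
  -- now pure arithmetic
  rw [htval] at hkey
  have hr2 : 2 ≤ n - s := by
    by_contra h
    push_neg at h
    interval_cases h' : (n - s) <;> omega
  exact stmt17_arith n s (n - s) hs (by omega) hr2 hkey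
end
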